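/- Let p be a prime and R a commutative ring in which p = 0 (an 𝔽_p-algebra). Let f ∈ R[[X]] be a formal power series with f(0) = 0 which is additive, i.e. f(X+Y) = f(X) + f(Y) in R[[X,Y]]. Then the coefficient of X^k in f vanishes unless k is a power of p; equivalently f = Σ_{i ≥ 0} a_i X^{p^i} for suitable a_i ∈ R. -/

import Mathlib

open PowerSeries

/-- The substitution `f(X+Y)` of `X+Y` into a one-variable power series `f`, as a formal
power series in two variables.  Since `(X+Y)^k` is homogeneous of degree `k`, its coefficient
at a monomial `m` is `(coeff f (|m|)) · (coeff m ((X+Y)^{|m|}))`. -/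
noncomputable def substXY {R : Type*} [CommRing R] (f : PowerSeries R) :
    MvPowerSeries (Fin 2) R := fun m =>
  PowerSeries.coeff (m 0 + m 1) f *
    MvPowerSeries.coeff m ((MvPowerSeries.X 0 + MvPowerSeries.X 1) ^ (m 0 + m 1))

/-- The substitution `f(X_i)` of the variable `X_i` (`i = 0, 1`) into a one-variable power
series `f`, as a formal power series in two variables. -/
noncomputable def substVar {R : Type*} [CommRing R] (i : Fin 2) (f : PowerSeries R) :
    MvPowerSeries (Fin 2) R := fun m =>
  PowerSeries.coeff (m 0 + m 1) f *
    MvPowerSeries.coeff m ((MvPowerSeries.X i : MvPowerSeries (Fin 2) R) ^ (m 0 + m 1))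

/-- `choose (p*a) (p*b) ≡ choose a b mod p`, a consequence of Lucas's theorem. -/
lemma choose_mul_p_modEq {p : ℕ} [Fact p.Prime] (a b : ℕ) :
    Nat.choose (p * a) (p * b) ≡ Nat.choose a b [MOD p] := by
  have hp : 0 < p := (Fact.out (p := p.Prime)).pos
  have := @Choose.choose_modEq_choose_mod_mul_choose_div_nat (p * a) (p * b) p _
  simpa [Nat.mul_mod_right, Nat.mul_div_cancel_left _ hp] using this

lemma choose_pow_mul_modEq {p : ℕ} [Fact p.Prime] (v : ℕ) (m : ℕ) :
    Nat.choose (p ^ v * m) (p ^ v) ≡ m [MOD p] := by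
  induction v with
  | zero => simp [Nat.choose_one_right, Nat.ModEq.refl]
  | succ v ih =>
      have h1 : p ^ (v + 1) * m = p * (p ^ v * m) := by ring
      have h2 : p ^ (v + 1) = p * (p ^ v * 1) := by ring
      rw [h1, h2]
      refine (choose_mul_p_modEq (p ^ v * m) (p ^ v * 1)).trans ?_
      simpa using ih

/-- Over an `𝔽_p`-algebra `R`, an additive power series `f` (with `f(0) = 0` and
`f(X+Y) = f(X) + f(Y)`) has `coeff k f = 0` unless `k` is a power of `p`;
equivalently `f = Σ_{i≥0} a_i X^{p^i}`. -/
theorem additive_powerSeries_coeff_eq_zero_of_not_pow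
    {p : ℕ} (hp : p.Prime) {R : Type*} [CommRing R] (hchar : (p : R) = 0)
    (f : PowerSeries R) (h0 : PowerSeries.constantCoeff f = 0)
    (hadd : substXY f = substVar 0 f + substVar 1 f)
    (k : ℕ) (hk : ¬ ∃ i : ℕ, k = p ^ i) :
    PowerSeries.coeff k f = 0 := by
  haveI : Fact p.Prime := ⟨hp⟩
  rcases Nat.eq_zero_or_pos k with hk0 | hk0
  · subst hk0; simpa [PowerSeries.coeff_zero_eq_constantCoeff] using h0
  -- decompose k = p^v * m with p ∤ m
  set v : ℕ := k.factorization p with hv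
  set a : ℕ := p ^ v with ha
  set m : ℕ := k / a with hm
  have hkam : a * m = k := by
    rw [ha, hm, ha, hv]
    exact Nat.ordProj_mul_ordCompl_eq_self k p
  have hpm : ¬ p ∣ m := Nat.not_dvd_ordCompl hp hk0.ne'
  have hm0 : m ≠ 0 := by
    intro h; rw [h, Nat.mul_zero] at hkam; omega
  have hm1 : m ≠ 1 := by
    intro h; rw [h, Nat.mul_one] at hkam; exact hk ⟨v, by omega⟩
  have ha0 : 0 < a := pow_pos hp.pos v
  have hak : a < k := by
    rw [← hkam]; nlinarith [Nat.one_lt_iff_ne_zero_and_ne_one.mpr ⟨hm0, hm1⟩]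
  set b : ℕ := k - a with hb
  have hb0 : 0 < b := by omega
  have hab : a + b = k := by omega
  -- the binomial coefficient choose k a is not divisible by p
  have hCm : Nat.choose k a ≡ m [MOD p] := by
    rw [← hkam]; exact choose_pow_mul_modEq v m
  have hC : ¬ p ∣ Nat.choose k a := by
    intro hd
    apply hpm
    have h1 : Nat.choose k a % p = m % p := hCm
    have h2 : Nat.choose k a % p = 0 := Nat.eq_zero_of_dvd_of_lt hd |> fun _ => Nat.mod_eq_zero_of_dvd hd
    exact Nat.dvd_of_mod_eq_zero (by omega)
  -- evaluate the additivity hypothesis at the monomial X^a Y^b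
  set m0 : Fin 2 →₀ ℕ := Finsupp.single 0 a + Finsupp.single 1 b with hm0def
  have hm00 : m0 0 = a := by simp [hm0def]
  have hm01 : m0 1 = b := by simp [hm0def]
  have key : substXY f m0 = substVar 0 f m0 + substVar 1 f m0 := congrFun hadd m0
  simp only [substXY, substVar] at key
  rw [hm00, hm01, hab] at key
  -- compute the three coefficients
  have hpow : MvPowerSeries.coeff m0
      ((MvPowerSeries.X 0 + MvPowerSeries.X 1 : MvPowerSeries (Fin 2) R) ^ k)
      = (Nat.choose k a : R) := by
    rw [add_pow, map_sum]
    have hterm : ∀ j ∈ Finset.range (k + 1),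
        MvPowerSeries.coeff m0
          ((MvPowerSeries.X 0 : MvPowerSeries (Fin 2) R) ^ j *
            (MvPowerSeries.X 1 : MvPowerSeries (Fin 2) R) ^ (k - j) * (Nat.choose k j : MvPowerSeries (Fin 2) R))
          = if j = a then (Nat.choose k a : R) else 0 := by
      intro j _
      rw [show ((Nat.choose k j : ℕ) : MvPowerSeries (Fin 2) R)
            = MvPowerSeries.C ((Nat.choose k j : ℕ) : R) by
          rw [map_natCast], MvPowerSeries.coeff_mul_C,
        MvPowerSeries.X_pow_eq, MvPowerSeries.X_pow_eq,
        MvPowerSeries.monomial_mul_monomial, one_mul, MvPowerSeries.coeff_monomial]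
      by_cases hj : j = a
      · subst hj
        have hmeq : m0 = Finsupp.single 0 a + Finsupp.single 1 (k - a) := by
          rw [hm0def, hb]
        rw [if_pos hmeq, if_pos rfl, one_mul]
      · rw [if_neg, if_neg hj, zero_mul]
        intro heq
        apply hj
        have := congrArg (fun g : Fin 2 →₀ ℕ => g 0) heq
        simpa [hm0def] using this.symm
    rw [Finset.sum_congr rfl hterm, Finset.sum_ite_eq' (Finset.range (k + 1)) a]
    rw [if_pos (Finset.mem_range.mpr (by omega))]
  have hX0 : MvPowerSeries.coeff m0
      ((MvPowerSeries.X 0 : MvPowerSeries (Fin 2) R) ^ k) = 0 := by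
    rw [MvPowerSeries.coeff_X_pow, if_neg]
    intro heq
    have := congrArg (fun g : Fin 2 →₀ ℕ => g 1) heq
    simp [hm0def] at this
    omega
  have hX1 : MvPowerSeries.coeff m0
      ((MvPowerSeries.X 1 : MvPowerSeries (Fin 2) R) ^ k) = 0 := by
    rw [MvPowerSeries.coeff_X_pow, if_neg]
    intro heq
    have := congrArg (fun g : Fin 2 →₀ ℕ => g 0) heq
    simp [hm0def] at this
    omega
  rw [hpow, hX0, hX1, mul_zero, add_zero] at key
  -- key : coeff k f * (choose k a : R) = 0 ; now invert choose k a mod p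
  have hcop : Nat.Coprime (Nat.choose k a) p := (hp.coprime_iff_not_dvd.mpr hC).symm
  obtain ⟨u, -, hu⟩ := Nat.exists_mul_mod_eq_one_of_coprime hcop hp.one_lt
  have hcast : ((Nat.choose k a * u : ℕ) : R) = 1 := by
    have hdm := Nat.div_add_mod (Nat.choose k a * u) p
    rw [hu] at hdm
    calc ((Nat.choose k a * u : ℕ) : R)
        = ((p * (Nat.choose k a * u / p) + 1 : ℕ) : R) := by rw [hdm]
      _ = 1 := by push_cast; rw [hchar]; ring
  calc PowerSeries.coeff k f
      = PowerSeries.coeff k f * ((Nat.choose k a * u : ℕ) : R) := by rw [hcast, mul_one]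
    _ = (PowerSeries.coeff k f * (Nat.choose k a : R)) * (u : R) := by push_cast; ring
    _ = 0 := by rw [key, zero_mul]
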